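/- Let G be a plane graph with all zigzags oriented. Then for every vertex, the number of type II edges incident to it is even, and for every face, the number of type I edges on its boundary is even. -/

import Mathlib

/-- A (connected) plane graph encoded as a combinatorial map on its set of darts
(directed edges).  `σ` rotates the darts around their initial vertex
(counter-clockwise), `α` is the fixed-point free involution exchanging the two
darts of every edge.  Vertices, edges and faces are the orbits of `σ`, `α` and
`σ * α` respectively; planarity is encoded by the Euler relation `V - E + F = 2`. -/
structure PlaneMap where
  D : Type
  instFin : Fintype D
  instDec : DecidableEq D
  σ : Equiv.Perm D
  α : Equiv.Perm D
  α_invol : ∀ d, α (α d) = d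
  α_nofix : ∀ d, α d ≠ d
  euler : (Nat.card (MulAction.orbitRel.Quotient (Subgroup.zpowers σ) D) : ℤ)
      - (Nat.card (MulAction.orbitRel.Quotient (Subgroup.zpowers α) D) : ℤ)
      + (Nat.card (MulAction.orbitRel.Quotient (Subgroup.zpowers (σ * α)) D) : ℤ) = 2

attribute [instance] PlaneMap.instFin PlaneMap.instDec

namespace PlaneMap

/-- The states of zigzag traversals: a dart being traversed, together with a
boolean telling whether the next turn is a left turn. -/
abbrev S (M : PlaneMap) : Type := M.D × Bool

/-- Alternately turning left or right at the end of the current dart. -/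
def turn (M : PlaneMap) : Equiv.Perm M.S where
  toFun s := (if s.2 then M.σ s.1 else M.σ⁻¹ s.1, !s.2)
  invFun s := (if s.2 then M.σ s.1 else M.σ⁻¹ s.1, !s.2)
  left_inv := by rintro ⟨d, b⟩; cases b <;> simp
  right_inv := by rintro ⟨d, b⟩; cases b <;> simp

/-- Moving to the other end of the current edge. -/
def flip (M : PlaneMap) : Equiv.Perm M.S := (M.α).prodCongr (Equiv.refl Bool)

/-- The zigzag (left-right path) successor map: go to the other end of the
current edge, then turn alternately left and right.  The orbits of `zig`
are the (directed) zigzags of the plane graph. -/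
def zig (M : PlaneMap) : Equiv.Perm M.S := (M.flip).trans M.turn

/-- Reversal of a zigzag state: same edge, opposite direction, opposite turn. -/
def rev (M : PlaneMap) : Equiv.Perm M.S :=
  (M.α).prodCongr (Function.Involutive.toPerm Bool.not Bool.not_not)

/-- An orientation of all zigzags of `M`: a set of states which is stable under
the zigzag successor and contains exactly one of the two opposite versions of
each traversal. -/
def IsOrientation (M : PlaneMap) (O : Set M.S) : Prop :=
  (∀ s, M.zig s ∈ O ↔ s ∈ O) ∧ (∀ s, Xor' (s ∈ O) (M.rev s ∈ O))

/-- The edge of the dart `d` is of type I w.r.t. the orientation `O`: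
the two chosen traversals of the edge go in opposite directions. -/
def TypeI (M : PlaneMap) (O : Set M.S) (d : M.D) : Prop :=
  ∃ b, (d, b) ∈ O ∧ (M.α d, b) ∈ O

/-- The edge of the dart `d` is of type II w.r.t. the orientation `O`:
the two chosen traversals of the edge go in the same direction. -/
def TypeII (M : PlaneMap) (O : Set M.S) (d : M.D) : Prop :=
  ∃ e, (e = d ∨ e = M.α d) ∧ ((e, true) ∈ O ∧ (e, false) ∈ O)

/-- A plane graph is cubic (`3`-valent) iff every `σ`-orbit has size `3`. -/
def Cubic (M : PlaneMap) : Prop := ∀ d, M.σ (M.σ (M.σ d)) = d ∧ M.σ d ≠ d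

end PlaneMap

section Aux

open Finset in
/-- Generic parity lemma: for a permutation `g` of a finite type and any
predicate `f`, the number of points where `f` differs from `f ∘ g` is even. -/
theorem even_card_not_iff_apply {X : Type*} [Fintype X] (g : Equiv.Perm X) (f : X → Prop) :
    Even (Nat.card {x : X // ¬ (f x ↔ f (g x))}) := by
  classical
  rw [Nat.card_eq_fintype_card, Fintype.card_subtype]
  rw [even_iff_two_dvd, ← ZMod.natCast_eq_zero_iff]
  have h1 : (((univ.filter fun x => ¬ (f x ↔ f (g x))).card : ℕ) : ZMod 2)
      = ∑ x, ((if f x then (1 : ZMod 2) else 0) + (if f (g x) then 1 else 0)) := by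
    rw [Finset.card_filter, Nat.cast_sum]
    refine Finset.sum_congr rfl fun x _ => ?_
    by_cases hx : f x <;> by_cases hgx : f (g x) <;> (simp [hx, hgx]; try decide)
  rw [h1, Finset.sum_add_distrib]
  rw [Equiv.sum_comp g (fun x => if f x then (1 : ZMod 2) else 0)]
  rw [← two_mul]
  simp [show (2 : ZMod 2) = 0 from rfl]

theorem sameCycle_invariant {X : Type*} (g : Equiv.Perm X) (Q : X → Prop)
    (h : ∀ x, Q (g x) ↔ Q x) {a b : X} (hab : g.SameCycle a b) : Q a ↔ Q b := by
  obtain ⟨i, rfl⟩ := hab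
  induction i using Int.induction_on with
  | zero => simp
  | succ n ih => rw [add_comm, zpow_add, zpow_one, Equiv.Perm.mul_apply, h]; exact ih
  | pred n ih =>
      rw [sub_eq_add_neg, add_comm, zpow_add, Equiv.Perm.mul_apply]
      rw [← h ((g ^ (-1 : ℤ)) ((g ^ (-n : ℤ)) a))]
      have : g ((g ^ (-1 : ℤ)) ((g ^ (-n : ℤ)) a)) = (g ^ (-n : ℤ)) a := by
        simp [zpow_neg, zpow_one]
      rw [this]
      exact ih

end Aux

open PlaneMap in
/-- **Parity of edge types at vertices and faces.**
Let `M` be a plane graph with all zigzags oriented by `O`.  Then for every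
vertex (the `σ`-orbit of a dart `d₀`) the number of incident type II edges is
even, and for every face (the `σ * α`-orbit of a dart `d₀`) the number of
type I edges on its boundary is even. -/
theorem typeII_even_at_vertices_typeI_even_on_faces (M : PlaneMap)
    (O : Set M.S) (hO : M.IsOrientation O) :
    (∀ d₀ : M.D,
        Even (Nat.card {d : M.D // M.σ.SameCycle d₀ d ∧ M.TypeII O d})) ∧
    (∀ d₀ : M.D,
        Even (Nat.card {d : M.D // (M.σ * M.α).SameCycle d₀ d ∧ M.TypeI O d})) := by
  classical
  obtain ⟨hzig, hxor⟩ := hO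
  -- m-relation: backwards state membership
  have hm : ∀ d, ((d, false) ∈ O ↔ ¬ ((M.α d, true) ∈ O)) := by
    intro d
    have h := hxor (M.α d, true)
    have hr : M.rev (M.α d, true) = (d, false) := by
      simp [PlaneMap.rev, M.α_invol]; rfl
    rw [hr] at h
    rcases h with ⟨h1, h2⟩ | ⟨h1, h2⟩ <;> tauto
  -- (A) k alternates along σ
  have hA : ∀ d, ((M.σ d, true) ∈ O ↔ ¬ ((d, true) ∈ O)) := by
    intro d
    have h1 := hzig (M.α (M.σ d), false)
    have hz : M.zig (M.α (M.σ d), false) = (d, true) := by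
      simp [PlaneMap.zig, PlaneMap.flip, PlaneMap.turn, Equiv.trans_apply, M.α_invol]
    rw [hz] at h1
    have h2 := hm (M.α (M.σ d))
    rw [M.α_invol] at h2
    tauto
  -- (A') k∘α alternates along σ
  have hA' : ∀ d, ((M.α (M.σ d), true) ∈ O ↔ ¬ ((M.α d, true) ∈ O)) := by
    intro d
    have h1 := hzig (M.α d, true)
    have hz : M.zig (M.α d, true) = (M.σ d, false) := by
      simp [PlaneMap.zig, PlaneMap.flip, PlaneMap.turn, Equiv.trans_apply, M.α_invol]
    rw [hz] at h1
    have h2 := hm (M.σ d)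
    tauto
  -- characterization of TypeII
  have hT2 : ∀ d, M.TypeII O d ↔ ¬ (((d, true) ∈ O) ↔ ((M.α d, true) ∈ O)) := by
    intro d
    constructor
    · rintro ⟨e, (rfl | rfl), h1, h2⟩
      · rw [hm] at h2; tauto
      · rw [hm, M.α_invol] at h2; tauto
    · intro h
      by_cases hd : (d, true) ∈ O
      · exact ⟨d, Or.inl rfl, hd, (hm d).mpr (by tauto)⟩
      · refine ⟨M.α d, Or.inr rfl, by tauto, (hm _).mpr ?_⟩
        rw [M.α_invol]; tauto
  -- characterization of TypeI
  have hT1 : ∀ d, M.TypeI O d ↔ (((d, true) ∈ O) ↔ ((M.α d, true) ∈ O)) := by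
    intro d
    constructor
    · rintro ⟨b, h1, h2⟩
      cases b
      · rw [hm] at h1; rw [hm, M.α_invol] at h2; tauto
      · tauto
    · intro h
      by_cases hd : (d, true) ∈ O
      · exact ⟨true, hd, h.mp hd⟩
      · refine ⟨false, (hm d).mpr (by tauto), (hm _).mpr ?_⟩
        rw [M.α_invol]; tauto
  -- TypeI as a sign change along the face permutation
  have hT1' : ∀ d, M.TypeI O d ↔
      ¬ (((d, true) ∈ O) ↔ (((M.σ * M.α) d, true) ∈ O)) := by
    intro d
    have h1 := hT1 d
    have h2 := hA (M.α d)
    rw [Equiv.Perm.mul_apply]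
    tauto
  -- TypeII is invariant along σ
  have hT2σ : ∀ d, M.TypeII O (M.σ d) ↔ M.TypeII O d := by
    intro d
    rw [hT2, hT2]
    have h1 := hA d
    have h2 := hA' d
    tauto
  constructor
  · -- vertices
    intro d₀
    by_cases h0 : M.TypeII O d₀
    · have hconst : ∀ d, M.σ.SameCycle d₀ d → M.TypeII O d :=
        fun d hd => (sameCycle_invariant M.σ (M.TypeII O) hT2σ hd).mp h0
      have e : {d : M.D // M.σ.SameCycle d₀ d ∧ M.TypeII O d}
          ≃ {d : M.D // M.σ.SameCycle d₀ d} :=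
        Equiv.subtypeEquivRight fun d => ⟨And.left, fun h => ⟨h, hconst d h⟩⟩
      rw [Nat.card_congr e]
      have key := even_card_not_iff_apply
        (M.σ.subtypePerm (p := fun d => M.σ.SameCycle d₀ d)
          (fun x => Equiv.Perm.sameCycle_apply_right))
        (fun x => (x.1, true) ∈ O)
      have e2 : {x : {d : M.D // M.σ.SameCycle d₀ d} //
            ¬ (((x.1, true) ∈ O) ↔
              (((M.σ.subtypePerm (p := fun d => M.σ.SameCycle d₀ d)
                (fun x => Equiv.Perm.sameCycle_apply_right)) x).1, true) ∈ O)}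
          ≃ {d : M.D // M.σ.SameCycle d₀ d} :=
        Equiv.subtypeUnivEquiv fun x => by
          have := hA x.1
          simp only [Equiv.Perm.subtypePerm_apply]
          tauto
      rwa [Nat.card_congr e2] at key
    · have : IsEmpty {d : M.D // M.σ.SameCycle d₀ d ∧ M.TypeII O d} :=
        ⟨fun x => h0 ((sameCycle_invariant M.σ (M.TypeII O) hT2σ x.2.1).mpr x.2.2)⟩
      rw [Nat.card_of_isEmpty]
      exact ⟨0, rfl⟩
  · -- faces
    intro d₀
    have key := even_card_not_iff_apply
      ((M.σ * M.α).subtypePerm (p := fun d => (M.σ * M.α).SameCycle d₀ d)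
        (fun x => Equiv.Perm.sameCycle_apply_right))
      (fun x => (x.1, true) ∈ O)
    have e : {x : {d : M.D // (M.σ * M.α).SameCycle d₀ d} //
          ¬ (((x.1, true) ∈ O) ↔
            ((((M.σ * M.α).subtypePerm (p := fun d => (M.σ * M.α).SameCycle d₀ d)
              (fun x => Equiv.Perm.sameCycle_apply_right)) x).1, true) ∈ O)}
        ≃ {d : M.D // (M.σ * M.α).SameCycle d₀ d ∧ M.TypeI O d} := by
      refine (Equiv.subtypeEquivRight (q := fun x =>
          ¬ (((x.1, true) ∈ O) ↔ (((M.σ * M.α) x.1, true) ∈ O))) fun x => by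
        simp only [Equiv.Perm.subtypePerm_apply]).trans ?_
      refine (Equiv.subtypeSubtypeEquivSubtypeInter
          (fun d => (M.σ * M.α).SameCycle d₀ d)
          (fun d => ¬ (((d, true) ∈ O) ↔ (((M.σ * M.α) d, true) ∈ O)))).trans
        (Equiv.subtypeEquivRight fun d => ?_)
      rw [hT1' d]
    rwa [Nat.card_congr e] at key
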